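/- Let Γ = {(r, A(r)) : r ∈ ℝ^d} ⊂ ℝⁿ be a d-dimensional Lipschitz graph with surface measure μ, and SΓ(x,t) = ∫_Γ ψ_t(x - y) dμ(y) with ψ_t(x) = t ∂_t K_t(x), K_t(x) = t^{-d/2} e^{-π|x|²/t}. Then for every k ≥ 0 there is a constant C_k depending only on k and d such that sup_{x ∈ Γ} |∂_t^k SΓ(x,t)| ≤ (C_k / t^k) · ‖Γ‖_*, where ‖Γ‖_* = sup_r √(det(g_{ij}(r))) with g_{ij} = ⟨∂z/∂r_i, ∂z/∂r_j⟩ for the parametrization z(r) = (r, A(r)). -/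

import Mathlib

open MeasureTheory Real
open scoped RealInnerProductSpace

/-- The ambient Euclidean space `ℝᵈ × ℝ^{n-d}` with the ℓ² (Euclidean) norm. -/
abbrev Amb (d m : ℕ) := WithLp 2 (EuclideanSpace ℝ (Fin d) × EuclideanSpace ℝ (Fin m))

/-- The graph parametrization `z(r) = (r, A(r))`. -/
noncomputable def z {d m : ℕ} (A : EuclideanSpace ℝ (Fin d) → EuclideanSpace ℝ (Fin m))
    (r : EuclideanSpace ℝ (Fin d)) : Amb d m :=
  (WithLp.equiv 2 (EuclideanSpace ℝ (Fin d) × EuclideanSpace ℝ (Fin m))).symm (r, A r)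

noncomputable def KG (d m : ℕ) (t : ℝ) (x : Amb d m) : ℝ :=
  t ^ (-(d : ℝ) / 2) * Real.exp (-π * ‖x‖ ^ 2 / t)

noncomputable def psiG (d m : ℕ) (t : ℝ) (x : Amb d m) : ℝ :=
  t * deriv (fun s => KG d m s x) t

/-- The surface-measure Jacobian `‖z'(r)‖ = √det(gᵢⱼ)`,
`gᵢⱼ = ⟪∂z/∂rᵢ, ∂z/∂rⱼ⟫`. -/
noncomputable def Jdet {d m : ℕ} (A : EuclideanSpace ℝ (Fin d) → EuclideanSpace ℝ (Fin m))
    (r : EuclideanSpace ℝ (Fin d)) : ℝ :=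
  Real.sqrt (Matrix.det (Matrix.of fun i j : Fin d =>
    (⟪fderiv ℝ (z A) r (EuclideanSpace.single i 1),
       fderiv ℝ (z A) r (EuclideanSpace.single j 1)⟫ : ℝ)))

/-! ### Auxiliary machinery -/

/-- Elementary building block: `s^b · p(a/s) · e^{-πa/s}`. -/
noncomputable def Phi (p : Polynomial ℝ) (b a s : ℝ) : ℝ :=
  s ^ b * p.eval (a / s) * Real.exp (-π * a / s)

/-- The transformation of the polynomial part under `d/ds`. -/
noncomputable def Ptrans (p : Polynomial ℝ) (b : ℝ) : Polynomial ℝ :=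
  Polynomial.C b * p - Polynomial.X * p.derivative + Polynomial.C π * Polynomial.X * p

lemma phi_hasDerivAt (p : Polynomial ℝ) (b a : ℝ) {s : ℝ} (hs : 0 < s) :
    HasDerivAt (fun s => Phi p b a s) (Phi (Ptrans p b) (b - 1) a s) s := by
  have hs0 := hs.ne'
  have h1 : HasDerivAt (fun s : ℝ => s ^ b) (b * s ^ (b - 1)) s :=
    Real.hasDerivAt_rpow_const (Or.inl hs0)
  have hinv : HasDerivAt (fun s : ℝ => a / s) (-(a / s ^ 2)) s := by
    have := (hasDerivAt_inv hs0).const_mul a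
    simpa [div_eq_mul_inv, mul_comm, neg_mul] using this
  have h2 : HasDerivAt (fun s : ℝ => p.eval (a / s))
      (p.derivative.eval (a / s) * -(a / s ^ 2)) s :=
    (p.hasDerivAt (a / s)).comp s hinv
  have hinv2 : HasDerivAt (fun s : ℝ => -π * a / s) (π * a / s ^ 2) s := by
    have := (hasDerivAt_inv hs0).const_mul (-π * a)
    have h' : -π * a * -(s ^ 2)⁻¹ = π * a / s ^ 2 := by field_simp
    simpa [div_eq_mul_inv, h'] using this
  have h3 : HasDerivAt (fun s : ℝ => Real.exp (-π * a / s))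
      (Real.exp (-π * a / s) * (π * a / s ^ 2)) s := hinv2.exp
  have H := (h1.mul h2).mul h3
  have hsb : s ^ b = s ^ (b - 1) * s := by
    have h := Real.rpow_add_one hs0 (b - 1)
    rw [sub_add_cancel] at h
    rw [h]
  refine H.congr_deriv ?_
  symm
  simp only [Pi.mul_apply, Phi, Ptrans, Polynomial.eval_add, Polynomial.eval_sub, Polynomial.eval_mul,
    Polynomial.eval_C, Polynomial.eval_X]
  rw [hsb]
  field_simp
  ring

lemma poly_exp_bound (p : Polynomial ℝ) :
    ∃ C : ℝ, 0 < C ∧ ∀ u : ℝ, 0 ≤ u →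
      |p.eval u| * Real.exp (-π * u) ≤ C * Real.exp (-2 * u) := by
  refine ⟨(∑ i ∈ Finset.range (p.natDegree + 1), |p.coeff i| * i.factorial) + 1, ?_, ?_⟩
  · have : 0 ≤ ∑ i ∈ Finset.range (p.natDegree + 1), |p.coeff i| * i.factorial :=
      Finset.sum_nonneg fun i _ => by positivity
    linarith
  · intro u hu
    set S := ∑ i ∈ Finset.range (p.natDegree + 1), |p.coeff i| * i.factorial with hS
    have hev : |p.eval u| ≤ S * Real.exp u := by
      rw [Polynomial.eval_eq_sum_range]
      calc |∑ i ∈ Finset.range (p.natDegree + 1), p.coeff i * u ^ i|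
          ≤ ∑ i ∈ Finset.range (p.natDegree + 1), |p.coeff i * u ^ i| :=
            Finset.abs_sum_le_sum_abs _ _
        _ ≤ ∑ i ∈ Finset.range (p.natDegree + 1), |p.coeff i| * (i.factorial * Real.exp u) := by
            refine Finset.sum_le_sum fun i _ => ?_
            rw [abs_mul]
            refine mul_le_mul_of_nonneg_left ?_ (abs_nonneg _)
            have h1 : u ^ i / i.factorial ≤ Real.exp u := by
              refine le_trans ?_ (Real.sum_le_exp_of_nonneg hu (i + 1))
              refine Finset.single_le_sum (f := fun j => u ^ j / j.factorial)
                (fun j _ => by positivity) (Finset.self_mem_range_succ i)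
            have hfac : (0:ℝ) < i.factorial := by positivity
            rw [abs_pow, abs_of_nonneg hu]
            calc u ^ i = (u ^ i / i.factorial) * i.factorial := by field_simp
              _ ≤ Real.exp u * i.factorial := mul_le_mul_of_nonneg_right h1 hfac.le
              _ = i.factorial * Real.exp u := by ring
        _ = S * Real.exp u := by rw [hS, Finset.sum_mul]; exact Finset.sum_congr rfl (by intros; ring)
    have hexp : Real.exp u * Real.exp (-π * u) ≤ Real.exp (-2 * u) := by
      rw [← Real.exp_add]
      apply Real.exp_le_exp.2
      nlinarith [Real.pi_gt_three]
    calc |p.eval u| * Real.exp (-π * u) ≤ (S * Real.exp u) * Real.exp (-π * u) :=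
          mul_le_mul_of_nonneg_right hev (Real.exp_nonneg _)
      _ = S * (Real.exp u * Real.exp (-π * u)) := by ring
      _ ≤ S * Real.exp (-2 * u) := by
          refine mul_le_mul_of_nonneg_left hexp ?_
          exact Finset.sum_nonneg fun i _ => by positivity
      _ ≤ (S + 1) * Real.exp (-2 * u) := by
          have := Real.exp_nonneg (-2 * u); nlinarith

lemma phi_bound (p : Polynomial ℝ) :
    ∃ C : ℝ, 0 < C ∧ ∀ b a s : ℝ, 0 ≤ a → 0 < s →
      |Phi p b a s| ≤ C * s ^ b * Real.exp (-2 * a / s) := by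
  obtain ⟨C, hC, h⟩ := poly_exp_bound p
  refine ⟨C, hC, fun b a s ha hs => ?_⟩
  have hu : 0 ≤ a / s := by positivity
  have hsb : 0 < s ^ b := Real.rpow_pos_of_pos hs b
  have h1 : -π * a / s = -π * (a / s) := by ring
  have h2 : -2 * a / s = -2 * (a / s) := by ring
  rw [Phi, abs_mul, abs_mul, abs_of_pos hsb, abs_of_nonneg (Real.exp_nonneg _), h1, h2]
  calc s ^ b * |p.eval (a / s)| * Real.exp (-π * (a / s))
      = s ^ b * (|p.eval (a / s)| * Real.exp (-π * (a / s))) := by ring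
    _ ≤ s ^ b * (C * Real.exp (-2 * (a / s))) :=
        mul_le_mul_of_nonneg_left (h _ hu) hsb.le
    _ = C * s ^ b * Real.exp (-2 * (a / s)) := by ring

/-- The polynomial appearing in the `j`-th time derivative of `ψ_t`. -/
noncomputable def Pq (d : ℕ) : ℕ → Polynomial ℝ
  | 0 => Polynomial.C (-(d : ℝ) / 2) + Polynomial.C π * Polynomial.X
  | (j + 1) => Ptrans (Pq d j) (-(d : ℝ) / 2 - j)

lemma psiG_eq (d m : ℕ) {t : ℝ} (ht : 0 < t) (x : Amb d m) :
    psiG d m t x = Phi (Pq d 0) (-(d : ℝ) / 2) (‖x‖ ^ 2) t := by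
  have hK : (fun s => KG d m s x) = fun s => Phi 1 (-(d : ℝ) / 2) (‖x‖ ^ 2) s := by
    funext s; simp [KG, Phi]
  rw [psiG, hK, (phi_hasDerivAt 1 (-(d : ℝ) / 2) (‖x‖ ^ 2) ht).deriv]
  have hsb : t ^ (-(d : ℝ) / 2) = t ^ (-(d : ℝ) / 2 - 1) * t := by
    have h := Real.rpow_add_one ht.ne' (-(d : ℝ) / 2 - 1)
    rw [sub_add_cancel] at h
    exact h
  simp only [Phi, Ptrans, Pq, Polynomial.eval_add, Polynomial.eval_sub, Polynomial.eval_mul,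
    Polynomial.eval_C, Polynomial.eval_X, Polynomial.eval_one, Polynomial.derivative_one,
    Polynomial.eval_zero, mul_one, mul_zero, sub_zero]
  rw [hsb]
  ring

noncomputable instance AmbMS (d m : ℕ) : MeasurableSpace (Amb d m) := borel _
instance AmbBS (d m : ℕ) : BorelSpace (Amb d m) := ⟨rfl⟩
instance AmbSC (d m : ℕ) : SecondCountableTopology (Amb d m) :=
  (WithLp.prodContinuousLinearEquiv 2 ℝ (EuclideanSpace ℝ (Fin d))
    (EuclideanSpace ℝ (Fin m))).toHomeomorph.isEmbedding.secondCountableTopology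

instance MatMS (n : ℕ) : MeasurableSpace (Matrix (Fin n) (Fin n) ℝ) := MeasurableSpace.pi
instance MatBS (n : ℕ) : BorelSpace (Matrix (Fin n) (Fin n) ℝ) := by
  unfold Matrix; exact Pi.borelSpace

section Graph
variable {d m : ℕ} {L : NNReal} {A : EuclideanSpace ℝ (Fin d) → EuclideanSpace ℝ (Fin m)}

lemma z_cont (hA : LipschitzWith L A) : Continuous (z A) := by
  have h : Continuous fun r : EuclideanSpace ℝ (Fin d) =>
      (WithLp.prodContinuousLinearEquiv 2 ℝ (EuclideanSpace ℝ (Fin d))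
        (EuclideanSpace ℝ (Fin m))).symm (r, A r) :=
    (WithLp.prodContinuousLinearEquiv 2 ℝ _ _).symm.continuous.comp
      (continuous_id.prodMk hA.continuous)
  exact h

lemma z_norm_fst_le (r₀ r : EuclideanSpace ℝ (Fin d)) :
    ‖r - r₀‖ ^ 2 ≤ ‖z A r₀ - z A r‖ ^ 2 := by
  have h := WithLp.prod_norm_sq_eq_of_L2 (z A r₀ - z A r)
  have hfst : (z A r₀ - z A r).fst = r₀ - r := rfl
  rw [h, hfst, norm_sub_rev]
  nlinarith [sq_nonneg ‖(z A r₀ - z A r).snd‖, sq_nonneg ‖r - r₀‖]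

lemma jdet_meas : Measurable (Jdet A) := by
  have hD : Measurable (fderiv ℝ (z A)) := measurable_fderiv ℝ (z A)
  have hDv : ∀ v : EuclideanSpace ℝ (Fin d), Measurable fun r => fderiv ℝ (z A) r v := fun v =>
    (ContinuousLinearMap.apply ℝ (Amb d m) v).continuous.measurable.comp hD
  have hmat : Measurable fun r => (Matrix.of fun i j : Fin d =>
      (⟪fderiv ℝ (z A) r (EuclideanSpace.single i 1),
        fderiv ℝ (z A) r (EuclideanSpace.single j 1)⟫ : ℝ)) := by
    apply measurable_pi_lambda
    intro i
    apply measurable_pi_lambda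
    intro j
    exact (hDv _).inner (hDv _)
  exact Real.continuous_sqrt.measurable.comp
    ((Continuous.matrix_det continuous_id).measurable.comp hmat)

end Graph

lemma gauss_int {d : ℕ} (c : ℝ) (hc : 0 < c) (r₀ : EuclideanSpace ℝ (Fin d)) :
    Integrable (fun r : EuclideanSpace ℝ (Fin d) => Real.exp (-c * ‖r - r₀‖ ^ 2)) := by
  have h1 : Integrable (fun v : EuclideanSpace ℝ (Fin d) => Real.exp (-c * ‖v‖ ^ 2)) := by
    have h := (GaussianFourier.integrable_cexp_neg_mul_sq_norm_add
      (V := EuclideanSpace ℝ (Fin d)) (b := (c : ℂ)) (by simpa using hc) 0 0).re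
    refine h.congr (Filter.Eventually.of_forall fun v => ?_)
    have : (-(c : ℂ) * (‖v‖ : ℂ) ^ 2 + 0 * (⟪(0 : EuclideanSpace ℝ (Fin d)), v⟫ : ℝ))
        = ((-c * ‖v‖ ^ 2 : ℝ) : ℂ) := by push_cast; ring
    simp only []
    rw [this]
    exact Complex.exp_ofReal_re _
  exact h1.comp_sub_right r₀

lemma gauss_val {d : ℕ} (c : ℝ) (hc : 0 < c) (r₀ : EuclideanSpace ℝ (Fin d)) :
    ∫ r : EuclideanSpace ℝ (Fin d), Real.exp (-c * ‖r - r₀‖ ^ 2) = (π / c) ^ ((d : ℝ) / 2) := by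
  rw [integral_sub_right_eq_self (fun v : EuclideanSpace ℝ (Fin d) => Real.exp (-c * ‖v‖ ^ 2)) r₀]
  rw [GaussianFourier.integral_rexp_neg_mul_sq_norm hc]
  norm_num [finrank_euclideanSpace_fin]

/-- For a `d`-dimensional Lipschitz graph `Γ = {(r, A(r))}` with surface measure,
`sup_{x ∈ Γ} |∂ₜᵏ SΓ(x,t)| ≤ (Cₖ/tᵏ) ‖Γ‖_*`, where `Cₖ` depends only on `k`
and `d`, and `‖Γ‖_*` is any bound for `sup_r √det(gᵢⱼ(r))`. -/
theorem stmt_14 (d k : ℕ) :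
    ∃ C : ℝ, ∀ (m : ℕ) (L : NNReal)
      (A : EuclideanSpace ℝ (Fin d) → EuclideanSpace ℝ (Fin m)),
      LipschitzWith L A →
      ∀ M : ℝ, (∀ r, Jdet A r ≤ M) →
      ∀ x₀ ∈ Set.range (z A), ∀ t : ℝ, 0 < t →
        |iteratedDeriv k
            (fun s => ∫ r : EuclideanSpace ℝ (Fin d), psiG d m s (x₀ - z A r) * Jdet A r) t|
          ≤ C / t ^ k * M := by
  obtain ⟨Cq, hCq0, hCq⟩ := phi_bound (Pq d k)
  refine ⟨Cq * (π / 2) ^ ((d : ℝ) / 2), ?_⟩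
  intro m L A hA M hM x₀ hx₀ t ht
  obtain ⟨r₀, hr₀⟩ := hx₀
  set a : EuclideanSpace ℝ (Fin d) → ℝ := fun r => ‖x₀ - z A r‖ ^ 2 with ha_def
  have ha0 : ∀ r, 0 ≤ a r := fun r => sq_nonneg _
  have haR : ∀ r, ‖r - r₀‖ ^ 2 ≤ a r := by
    intro r
    rw [ha_def]
    simp only
    rw [← hr₀, show z A r₀ - z A r = z A r₀ - z A r from rfl]
    exact z_norm_fst_le r₀ r
  have hw0 : ∀ r, 0 ≤ Jdet A r := fun r => Real.sqrt_nonneg _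
  have hM0 : 0 ≤ M := le_trans (hw0 0) (hM 0)
  have hwm : AEStronglyMeasurable (Jdet A) volume := jdet_meas.aestronglyMeasurable
  have ha_cont : Continuous a := (continuous_const.sub (z_cont hA)).norm.pow 2
  -- measurability of the integrands
  have hmeas : ∀ (p : Polynomial ℝ) (b s : ℝ),
      AEStronglyMeasurable (fun r => Phi p b (a r) s * Jdet A r) volume := by
    intro p b s
    refine (Continuous.aestronglyMeasurable ?_).mul hwm
    have hc : Continuous fun x : ℝ => Phi p b x s := by
      unfold Phi
      exact (continuous_const.mul (p.continuous.comp (continuous_id.div_const s))).mul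
        (Real.continuous_exp.comp ((continuous_const.mul continuous_id).div_const s))
    exact hc.comp ha_cont
  -- integrability of the integrands
  have hint : ∀ (p : Polynomial ℝ) (C : ℝ),
      (∀ b' a' s' : ℝ, 0 ≤ a' → 0 < s' → |Phi p b' a' s'| ≤ C * s' ^ b' * Real.exp (-2 * a' / s'))
      → ∀ (b s : ℝ), 0 < s →
      (∀ r, ‖Phi p b (a r) s * Jdet A r‖
        ≤ (C * s ^ b * M) * Real.exp (-(2 / s) * ‖r - r₀‖ ^ 2)) ∧
      Integrable (fun r => Phi p b (a r) s * Jdet A r) := by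
    intro p C hC b s hs
    have hCnn : 0 ≤ C := by
      have := (abs_nonneg (Phi p 0 0 1)).trans (hC 0 0 1 le_rfl one_pos)
      have h1 : (1:ℝ) ^ (0:ℝ) = 1 := Real.rpow_zero 1
      nlinarith [Real.exp_pos (-2 * (0:ℝ) / 1)]
    have hbd : ∀ r, ‖Phi p b (a r) s * Jdet A r‖
        ≤ (C * s ^ b * M) * Real.exp (-(2 / s) * ‖r - r₀‖ ^ 2) := by
      intro r
      have hsb : (0:ℝ) < s ^ b := Real.rpow_pos_of_pos hs b
      have h1 : ‖Phi p b (a r) s * Jdet A r‖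
          ≤ (C * s ^ b * Real.exp (-2 * a r / s)) * M := by
        rw [Real.norm_eq_abs, abs_mul, abs_of_nonneg (hw0 r)]
        exact mul_le_mul (hC b (a r) s (ha0 r) hs) (hM r) (hw0 r) (by positivity)
      refine h1.trans ?_
      have h2 : Real.exp (-2 * a r / s) ≤ Real.exp (-(2 / s) * ‖r - r₀‖ ^ 2) := by
        apply Real.exp_le_exp.2
        have hn := haR r
        have h3 : (2 / s) * ‖r - r₀‖ ^ 2 ≤ (2 / s) * a r :=
          mul_le_mul_of_nonneg_left hn (by positivity)
        have h4 : -2 * a r / s = -((2 / s) * a r) := by ring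
        linarith [h4.le, h4.ge]
      calc (C * s ^ b * Real.exp (-2 * a r / s)) * M
          = (C * s ^ b * M) * Real.exp (-2 * a r / s) := by ring
        _ ≤ (C * s ^ b * M) * Real.exp (-(2 / s) * ‖r - r₀‖ ^ 2) :=
            mul_le_mul_of_nonneg_left h2 (by positivity)
    refine ⟨hbd, ?_⟩
    exact Integrable.mono' ((gauss_int (2 / s) (by positivity) r₀).const_mul (C * s ^ b * M))
      (hmeas p b s) (Filter.Eventually.of_forall hbd)
  -- the derivative step
  have hderiv : ∀ (p : Polynomial ℝ) (b : ℝ), b ≤ 0 → ∀ s : ℝ, 0 < s →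
      HasDerivAt (fun s' => ∫ r, Phi p b (a r) s' * Jdet A r)
        (∫ r, Phi (Ptrans p b) (b - 1) (a r) s * Jdet A r) s := by
    intro p b hb s hs
    obtain ⟨C, hC0, hC⟩ := phi_bound (Ptrans p b)
    obtain ⟨Cp, hCp0, hCp⟩ := phi_bound p
    have hball : ∀ s' ∈ Metric.ball s (s / 2), s / 2 < s' ∧ s' < 3 * s / 2 := by
      intro s' hs'
      rw [Metric.mem_ball, Real.dist_eq, abs_lt] at hs'
      constructor <;> linarith [hs'.1, hs'.2]
    refine (hasDerivAt_integral_of_dominated_loc_of_deriv_le (s := Metric.ball s (s / 2))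
      (F' := fun s' r => Phi (Ptrans p b) (b - 1) (a r) s' * Jdet A r) (Metric.ball_mem_nhds s (by positivity))
      (Filter.Eventually.of_forall fun s' => hmeas p b s')
      ((hint p Cp hCp b s hs).2)
      (hmeas (Ptrans p b) (b - 1) s)
      (bound := fun r => (C * (s / 2) ^ (b - 1) * M) * Real.exp (-(1 / s) * ‖r - r₀‖ ^ 2))
      (Filter.Eventually.of_forall fun r s' hs' => ?_)
      ((gauss_int (1 / s) (by positivity) r₀).const_mul _)
      (Filter.Eventually.of_forall fun r s' hs' => ?_)).2
    · obtain ⟨h1, h2⟩ := hball s' hs'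
      have hs'0 : 0 < s' := lt_trans (by positivity) h1
      have e1 : |Phi (Ptrans p b) (b - 1) (a r) s'|
          ≤ C * s' ^ (b - 1) * Real.exp (-2 * a r / s') := hC _ _ _ (ha0 r) hs'0
      have e2 : s' ^ (b - 1) ≤ (s / 2) ^ (b - 1) :=
        Real.rpow_le_rpow_of_nonpos (by positivity) h1.le (by linarith)
      have e3 : Real.exp (-2 * a r / s') ≤ Real.exp (-(1 / s) * ‖r - r₀‖ ^ 2) := by
        apply Real.exp_le_exp.2
        have hn := haR r
        have har := ha0 r
        have k1 : ‖r - r₀‖ ^ 2 / s ≤ 2 * a r / s' := by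
          rw [div_le_div_iff₀ hs hs'0]
          nlinarith
        have k2 : -(1 / s) * ‖r - r₀‖ ^ 2 = -(‖r - r₀‖ ^ 2 / s) := by ring
        have k3 : -2 * a r / s' = -(2 * a r / s') := by ring
        rw [k2, k3]
        linarith
      rw [Real.norm_eq_abs, abs_mul, abs_of_nonneg (hw0 r)]
      calc |Phi (Ptrans p b) (b - 1) (a r) s'| * Jdet A r
          ≤ (C * s' ^ (b - 1) * Real.exp (-2 * a r / s')) * M :=
            mul_le_mul e1 (hM r) (hw0 r) (by positivity)
        _ ≤ (C * (s / 2) ^ (b - 1) * Real.exp (-(1 / s) * ‖r - r₀‖ ^ 2)) * M := by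
            have := mul_le_mul (mul_le_mul_of_nonneg_left e2 hC0.le) e3
              (Real.exp_nonneg _) (by positivity)
            exact mul_le_mul_of_nonneg_right this hM0
        _ = (C * (s / 2) ^ (b - 1) * M) * Real.exp (-(1 / s) * ‖r - r₀‖ ^ 2) := by ring
    · obtain ⟨h1, _⟩ := hball s' hs'
      have hs'0 : 0 < s' := lt_trans (by positivity) h1
      exact (phi_hasDerivAt p b (a r) hs'0).mul_const _
  -- inductive formula for the iterated derivatives
  have key : ∀ (j : ℕ) (s : ℝ), 0 < s →
      iteratedDeriv j (fun s' => ∫ r, psiG d m s' (x₀ - z A r) * Jdet A r) s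
        = ∫ r, Phi (Pq d j) (-(d : ℝ) / 2 - j) (a r) s * Jdet A r := by
    intro j
    induction j with
    | zero =>
      intro s hs
      rw [iteratedDeriv_zero]
      refine integral_congr_ae (Filter.Eventually.of_forall fun r => ?_)
      simp only
      rw [psiG_eq d m hs, ha_def]
      norm_num
    | succ j ih =>
      intro s hs
      rw [iteratedDeriv_succ]
      have heq : iteratedDeriv j (fun s' => ∫ r, psiG d m s' (x₀ - z A r) * Jdet A r)
          =ᶠ[nhds s] fun s' => ∫ r, Phi (Pq d j) (-(d : ℝ) / 2 - j) (a r) s' * Jdet A r := by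
        filter_upwards [IsOpen.mem_nhds isOpen_Ioi hs] with s' hs' using ih s' hs'
      rw [heq.deriv_eq]
      have hb : -(d : ℝ) / 2 - (j : ℝ) ≤ 0 := by
        have h1 : (0:ℝ) ≤ (d : ℝ) := Nat.cast_nonneg d
        have h2 : (0:ℝ) ≤ (j : ℝ) := Nat.cast_nonneg j
        linarith
      rw [(hderiv (Pq d j) (-(d : ℝ) / 2 - j) hb s hs).deriv]
      refine integral_congr_ae (Filter.Eventually.of_forall fun r => ?_)
      have hexp : -(d : ℝ) / 2 - (j : ℝ) - 1 = -(d : ℝ) / 2 - ((j + 1 : ℕ) : ℝ) := by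
        push_cast; ring
      simp only [Pq]
      rw [hexp]
  -- final estimate
  rw [key k t ht]
  obtain ⟨hbd, _⟩ := hint (Pq d k) Cq hCq (-(d : ℝ) / 2 - k) t ht
  have hI : ‖∫ r, Phi (Pq d k) (-(d : ℝ) / 2 - k) (a r) t * Jdet A r‖
      ≤ ∫ r, (Cq * t ^ (-(d : ℝ) / 2 - (k : ℝ)) * M) * Real.exp (-(2 / t) * ‖r - r₀‖ ^ 2) :=
    norm_integral_le_of_norm_le ((gauss_int (2 / t) (by positivity) r₀).const_mul _)
      (Filter.Eventually.of_forall hbd)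
  rw [integral_const_mul, gauss_val (2 / t) (by positivity) r₀] at hI
  rw [← Real.norm_eq_abs]
  refine hI.trans (le_of_eq ?_)
  have hval : (π / (2 / t)) ^ ((d : ℝ) / 2) = (π / 2) ^ ((d : ℝ) / 2) * t ^ ((d : ℝ) / 2) := by
    rw [show π / (2 / t) = (π / 2) * t by field_simp]
    exact Real.mul_rpow (by positivity) ht.le
  have hpow : t ^ (-(d : ℝ) / 2 - (k : ℝ)) * t ^ ((d : ℝ) / 2) = (t ^ k)⁻¹ := by
    rw [← Real.rpow_add ht, show -(d : ℝ) / 2 - (k : ℝ) + (d : ℝ) / 2 = -(k : ℝ) by ring,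
      Real.rpow_neg ht.le, Real.rpow_natCast]
  rw [hval]
  calc Cq * t ^ (-(d : ℝ) / 2 - (k : ℝ)) * M * ((π / 2) ^ ((d : ℝ) / 2) * t ^ ((d : ℝ) / 2))
      = Cq * (π / 2) ^ ((d : ℝ) / 2) * (t ^ (-(d : ℝ) / 2 - (k : ℝ)) * t ^ ((d : ℝ) / 2)) * M := by
        ring
    _ = Cq * (π / 2) ^ ((d : ℝ) / 2) * (t ^ k)⁻¹ * M := by rw [hpow]
    _ = Cq * (π / 2) ^ ((d : ℝ) / 2) / t ^ k * M := by ring
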